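/- Compositionality of typing with respect to contexts: suppose Π' ⊢ G'[·] : ⟨φ',Λ'⟩ is derivable in the type system extended by the axiom Π ⊢ [·] : ⟨φ,Λ⟩ for the hole. Then for every ground g-choreography G such that Π ⊢ G : ⟨φ,Λ⟩ is derivable, the judgement Π' ⊢ G'[G] : ⟨φ',Λ'⟩ is derivable, and consequently ⟦G'[G]⟧ ≠ ⊥. -/

import Mathlib

open scoped Classical

namespace Choreo

/-! ## Labels -/

/-- Communication labels: output `A B!m` and input `A B?m`. -/
inductive Label (P M : Type) where
  | out : P → P → M → Label P M
  | inp : P → P → M → Label P M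

variable {P M : Type}

/-- The subject of a label: the sender of an output, the receiver of an input. -/
def Label.sbj : Label P M → P
  | .out a _ _ => a
  | .inp _ b _ => b

/-- The set `L^!` of output labels (sender and receiver distinct). -/
def Lout : Set (Label P M) := {l | ∃ a b m, a ≠ b ∧ l = .out a b m}

/-- The set `L^?` of input labels (sender and receiver distinct). -/
def Lin : Set (Label P M) := {l | ∃ a b m, a ≠ b ∧ l = .inp a b m}

/-- `L̂(A)`: the labels in `L` whose subject is `A`. -/
def hat (L : Set (Label P M)) (A : P) : Set (Label P M) := {l ∈ L | l.sbj = A}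

/-- `sbj(L)`: the set of subjects of the labels in `L`. -/
def sbjSet (L : Set (Label P M)) : Set P := Label.sbj '' L

/-- `L − Π`: the labels in `L` whose subject is not in `Π`. -/
def lminus (L : Set (Label P M)) (Γ : Set P) : Set (Label P M) := {l ∈ L | l.sbj ∉ Γ}

/-! ## Labelled event structures (events drawn from ℕ) -/

/-- Data of a labelled (prime) event structure over events drawn from `ℕ`. -/
structure ES (P M : Type) where
  ev : Set ℕ
  le : ℕ → ℕ → Prop
  conf : ℕ → ℕ → Prop
  lbl : ℕ → Label P M

namespace ES

variable (E : ES P M)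

/-- Configurations: downward-closed conflict-free sets of events. -/
def Config (x : Set ℕ) : Prop :=
  x ⊆ E.ev ∧ (∀ e ∈ x, ∀ f ∈ E.ev, E.le f e → f ∈ x) ∧
    ∀ e ∈ x, ∀ f ∈ x, ¬ E.conf e f

/-- `MaxC E`: the ⊆-maximal configurations of `E`. -/
def MaxC : Set (Set ℕ) := {x | E.Config x ∧ ∀ y, E.Config y → x ⊆ y → y = x}

/-- Minimal events of `s ⊆ E.ev` with respect to `E.le`. -/
def minIn (s : Set ℕ) : Set ℕ := {e ∈ s | ∀ f ∈ s, E.le f e → f = e}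

/-- Maximal events of `s ⊆ E.ev` with respect to `E.le`. -/
def maxIn (s : Set ℕ) : Set ℕ := {e ∈ s | ∀ f ∈ s, E.le e f → f = e}

def minEv : Set ℕ := E.minIn E.ev
def maxEv : Set ℕ := E.maxIn E.ev

/-- Labels of the minimal events of `E`. -/
def minLbl : Set (Label P M) := E.lbl '' E.minEv

/-- Labels of the maximal events of `E`. -/
def maxLbl : Set (Label P M) := E.lbl '' E.maxEv

/-- All labels occurring in `E`. -/
def lblSet : Set (Label P M) := E.lbl '' E.ev

/-- The projection `E↾A`: the restriction of `E` to the events whose label has subject `A`. -/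
def proj (A : P) : ES P M where
  ev := {e ∈ E.ev | (E.lbl e).sbj = A}
  le u v := E.le u v ∧ (u ∈ E.ev ∧ (E.lbl u).sbj = A) ∧ (v ∈ E.ev ∧ (E.lbl v).sbj = A)
  conf u v := E.conf u v ∧ (u ∈ E.ev ∧ (E.lbl u).sbj = A) ∧ (v ∈ E.ev ∧ (E.lbl v).sbj = A)
  lbl := E.lbl

/-- The projection `x↾A` of a configuration (as a set of events of `E`). -/
def projC (x : Set ℕ) (A : P) : Set ℕ := {e ∈ x | (E.lbl e).sbj = A}

end ES

/-! ## Constructions on event structures -/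

/-- Tag for the events of a left component. -/
def tagL (e : ℕ) : ℕ := Nat.pair 0 e
/-- Tag for the events of a right component. -/
def tagR (e : ℕ) : ℕ := Nat.pair 1 e
/-- Tag for the events of the copy of the second component indexed by (the code of) a
maximal configuration of the first one. -/
def tagC (k e : ℕ) : ℕ := Nat.pair 1 (Nat.pair k e)

/-- A code (injective on finite sets) of sets of naturals. -/
noncomputable def encSet (x : Set ℕ) : ℕ :=
  if h : x.Finite then h.toFinset.sum (fun n => 2 ^ n) else 0

/-- The empty event structure `ε`. -/
noncomputable def esEmpty [Nonempty P] [Nonempty M] : ES P M where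
  ev := ∅
  le _ _ := False
  conf _ _ := False
  lbl _ := Label.out Classical.ofNonempty Classical.ofNonempty Classical.ofNonempty

/-- `⟦A→B:m⟧`: two ordered events labelled `A B!m < A B?m`. -/
def esAct (a b : P) (m : M) : ES P M where
  ev := {0, 1}
  le u v := (u = 0 ∧ v = 0) ∨ (u = 0 ∧ v = 1) ∨ (u = 1 ∧ v = 1)
  conf _ _ := False
  lbl e := if e = 0 then Label.out a b m else Label.inp a b m

/-- Tensor product `E1 ⊗ E2` (componentwise disjoint union). -/
def esTensor (E1 E2 : ES P M) : ES P M where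
  ev := (tagL '' E1.ev) ∪ (tagR '' E2.ev)
  le u v := (∃ e ∈ E1.ev, ∃ f ∈ E1.ev, E1.le e f ∧ u = tagL e ∧ v = tagL f) ∨
            (∃ e ∈ E2.ev, ∃ f ∈ E2.ev, E2.le e f ∧ u = tagR e ∧ v = tagR f)
  conf u v := (∃ e ∈ E1.ev, ∃ f ∈ E1.ev, E1.conf e f ∧ u = tagL e ∧ v = tagL f) ∨
              (∃ e ∈ E2.ev, ∃ f ∈ E2.ev, E2.conf e f ∧ u = tagR e ∧ v = tagR f)
  lbl u := if (Nat.unpair u).1 = 0 then E1.lbl (Nat.unpair u).2 else E2.lbl (Nat.unpair u).2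

/-- Sum `E1 + E2`: disjoint union with all cross pairs of events in conflict. -/
def esSum (E1 E2 : ES P M) : ES P M :=
  { esTensor E1 E2 with
    conf := fun u v => (esTensor E1 E2).conf u v ∨
      (∃ e ∈ E1.ev, ∃ f ∈ E2.ev, (u = tagL e ∧ v = tagR f) ∨ (u = tagR f ∧ v = tagL e)) }

/-- Sequential composition: appends to each maximal configuration `x` of `E1` a disjoint
copy of `E2`, ordering an event of `x` below an event of the copy whenever their labels
have the same subject. -/
noncomputable def esSeq (E1 E2 : ES P M) : ES P M where
  ev := (tagL '' E1.ev) ∪ {u | ∃ x ∈ E1.MaxC, ∃ e ∈ E2.ev, u = tagC (encSet x) e}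
  le u v :=
    (∃ e ∈ E1.ev, ∃ f ∈ E1.ev, E1.le e f ∧ u = tagL e ∧ v = tagL f) ∨
    (∃ x ∈ E1.MaxC, ∃ e ∈ E2.ev, ∃ f ∈ E2.ev, E2.le e f ∧
       u = tagC (encSet x) e ∧ v = tagC (encSet x) f) ∨
    (∃ x ∈ E1.MaxC, ∃ e ∈ x, ∃ f ∈ E2.ev, (E1.lbl e).sbj = (E2.lbl f).sbj ∧
       u = tagL e ∧ v = tagC (encSet x) f)
  conf u v :=
    (∃ e ∈ E1.ev, ∃ f ∈ E1.ev, E1.conf e f ∧ u = tagL e ∧ v = tagL f) ∨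
    (∃ x ∈ E1.MaxC, ∃ e ∈ E2.ev, ∃ f ∈ E2.ev, E2.conf e f ∧
       u = tagC (encSet x) e ∧ v = tagC (encSet x) f) ∨
    (∃ x ∈ E1.MaxC, ∃ x' ∈ E1.MaxC, x ≠ x' ∧ ∃ e ∈ E2.ev, ∃ f ∈ E2.ev,
       u = tagC (encSet x) e ∧ v = tagC (encSet x') f) ∨
    (∃ x ∈ E1.MaxC, ∃ e ∈ E1.ev, (∃ e' ∈ x, E1.conf e e') ∧ ∃ f ∈ E2.ev,
       ((u = tagL e ∧ v = tagC (encSet x) f) ∨ (u = tagC (encSet x) f ∧ v = tagL e)))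
  lbl u := if (Nat.unpair u).1 = 0 then E1.lbl (Nat.unpair u).2
           else E2.lbl (Nat.unpair (Nat.unpair u).2).2

/-! ## Well-branchedness -/

/-- Labels of the minimal events of the projection `E↾A`. -/
def minLblP (E : ES P M) (A : P) : Set (Label P M) := (E.proj A).minLbl

/-- `A` is active for the branches `E1`, `E2`. -/
def active (E1 E2 : ES P M) (A : P) : Prop :=
  minLblP E1 A ≠ ∅ ∧ minLblP E2 A ≠ ∅ ∧
  Disjoint (minLblP E1 A) (minLblP E2 A) ∧
  minLblP E1 A ∪ minLblP E2 A ⊆ Lout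

/-- `B` is passive for the branches `E1`, `E2`. -/
def passive (E1 E2 : ES P M) (B : P) : Prop :=
  Disjoint (minLblP E1 B) (minLblP E2 B) ∧
  minLblP E1 B ∪ minLblP E2 B ⊆ Lin ∧
  (minLblP E1 B = ∅ ↔ minLblP E2 B = ∅)

/-- Well-branchedness: a unique active participant, all other participants passive. -/
def wb (E1 E2 : ES P M) : Prop :=
  ∃ A, active E1 E2 A ∧ (∀ A', active E1 E2 A' → A' = A) ∧
    ∀ B, B ≠ A → passive E1 E2 B

/-! ## Ground g-choreographies and their semantics -/

/-- Ground g-choreographies: `G ::= 0 | A→B:m | G;G | G|G | G+G`. -/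
inductive GC (P M : Type) where
  | nil : GC P M
  | act : P → P → M → GC P M
  | seq : GC P M → GC P M → GC P M
  | par : GC P M → GC P M → GC P M
  | cho : GC P M → GC P M → GC P M

/-- `P(G)`: the participants occurring in `G`. -/
def parts : GC P M → Set P
  | .nil => ∅
  | .act a b _ => {a, b}
  | .seq g1 g2 => parts g1 ∪ parts g2
  | .par g1 g2 => parts g1 ∪ parts g2
  | .cho g1 g2 => parts g1 ∪ parts g2

/-- The semantics `⟦G⟧`: a labelled event structure, or `none` (i.e. `⊥`) when a side
condition fails (the grammar requires `A ≠ B` in interactions; parallel requires disjoint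
label sets; choice requires well-branchedness). -/
noncomputable def gsem [Nonempty P] [Nonempty M] : GC P M → Option (ES P M)
  | .nil => some esEmpty
  | .act a b m => if a = b then none else some (esAct a b m)
  | .seq g1 g2 =>
      match gsem g1, gsem g2 with
      | some E1, some E2 => some (esSeq E1 E2)
      | _, _ => none
  | .par g1 g2 =>
      match gsem g1, gsem g2 with
      | some E1, some E2 =>
          if Disjoint E1.lblSet E2.lblSet then some (esTensor E1 E2) else none
      | _, _ => none
  | .cho g1 g2 =>
      match gsem g1, gsem g2 with
      | some E1, some E2 => if wb E1 E2 then some (esSum E1 E2) else none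
      | _, _ => none

/-! ## The typing system -/

/-- Output uniform sets of labels. -/
def outUniform (U V : Set (Label P M)) : Prop := Disjoint U V ∧ U ∪ V ⊆ Lout

/-- Input uniform sets of labels. -/
def inUniform (U V : Set (Label P M)) : Prop := Disjoint U V ∧ U ∪ V ⊆ Lin

/-- The compatibility condition `compch(φ1,φ2,Π)` of rule t-ch. -/
def compch (φ1 φ2 : Set (Label P M)) (Γ : Set P) : Prop :=
  ∃ A ∈ Γ,
    (outUniform (hat φ1 A) (hat φ2 A) ∧ hat φ1 A ≠ ∅ ∧ hat φ2 A ≠ ∅) ∧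
    (∀ A' ∈ Γ, (outUniform (hat φ1 A') (hat φ2 A') ∧ hat φ1 A' ≠ ∅ ∧ hat φ2 A' ≠ ∅) →
        A' = A) ∧
    ∀ B ∈ Γ, B ≠ A →
      inUniform (hat φ1 B) (hat φ2 B) ∧ (hat φ1 B = ∅ ↔ hat φ2 B = ∅)

/-- The typing judgement `Π ⊢ G : ⟨φ,Λ⟩`. -/
inductive Typing : Set P → GC P M → Set (Label P M) → Set (Label P M) → Prop where
  | temp : Typing ∅ GC.nil ∅ ∅
  | tint {a b : P} {m : M} (hab : a ≠ b) :
      Typing {a, b} (GC.act a b m)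
        {Label.out a b m, Label.inp a b m} {Label.out a b m, Label.inp a b m}
  | tseq {Γ1 Γ2 : Set P} {g1 g2 : GC P M} {φ1 φ2 Λ1 Λ2 : Set (Label P M)} :
      Typing Γ1 g1 φ1 Λ1 → Typing Γ2 g2 φ2 Λ2 →
      Typing (Γ1 ∪ Γ2) (GC.seq g1 g2) (φ1 ∪ lminus φ2 Γ1) (Λ2 ∪ lminus Λ1 Γ2)
  | tpar {Γ1 Γ2 : Set P} {g1 g2 : GC P M} {φ1 φ2 Λ1 Λ2 : Set (Label P M)} :
      Typing Γ1 g1 φ1 Λ1 → Typing Γ2 g2 φ2 Λ2 → Γ1 ∩ Γ2 = ∅ →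
      Typing (Γ1 ∪ Γ2) (GC.par g1 g2) (φ1 ∪ φ2) (Λ1 ∪ Λ2)
  | tch {Γ : Set P} {g1 g2 : GC P M} {φ1 φ2 Λ1 Λ2 : Set (Label P M)} :
      Typing Γ g1 φ1 Λ1 → Typing Γ g2 φ2 Λ2 → compch φ1 φ2 Γ →
      Typing Γ (GC.cho g1 g2) (φ1 ∪ φ2) (Λ1 ∪ Λ2)


/-! ## One-hole contexts and their typing (hole axiom `Γh ⊢ [·] : ⟨φh,Λh⟩`) -/

/-- g-choreography contexts with a single hole. -/
inductive Ctx (P M : Type) where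
  | hole : Ctx P M
  | seqL : Ctx P M → GC P M → Ctx P M
  | seqR : GC P M → Ctx P M → Ctx P M
  | parL : Ctx P M → GC P M → Ctx P M
  | parR : GC P M → Ctx P M → Ctx P M
  | choL : Ctx P M → GC P M → Ctx P M
  | choR : GC P M → Ctx P M → Ctx P M

/-- `C.fill g = C[g]`, the replacement of the hole of `C` by `g`. -/
def Ctx.fill : Ctx P M → GC P M → GC P M
  | .hole, g => g
  | .seqL c g2, g => GC.seq (c.fill g) g2
  | .seqR g1 c, g => GC.seq g1 (c.fill g)
  | .parL c g2, g => GC.par (c.fill g) g2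
  | .parR g1 c, g => GC.par g1 (c.fill g)
  | .choL c g2, g => GC.cho (c.fill g) g2
  | .choR g1 c, g => GC.cho g1 (c.fill g)

/-- Typing of one-hole contexts in the type system extended with the axiom
`Γh ⊢ [·] : ⟨φh,Λh⟩` for the hole. -/
inductive CTyping (Γh : Set P) (φh Λh : Set (Label P M)) :
    Set P → Ctx P M → Set (Label P M) → Set (Label P M) → Prop where
  | hole : CTyping Γh φh Λh Γh Ctx.hole φh Λh
  | seqL {Γ1 Γ2 : Set P} {c : Ctx P M} {g : GC P M} {φ1 φ2 Λ1 Λ2 : Set (Label P M)} :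
      CTyping Γh φh Λh Γ1 c φ1 Λ1 → Typing Γ2 g φ2 Λ2 →
      CTyping Γh φh Λh (Γ1 ∪ Γ2) (Ctx.seqL c g) (φ1 ∪ lminus φ2 Γ1) (Λ2 ∪ lminus Λ1 Γ2)
  | seqR {Γ1 Γ2 : Set P} {g : GC P M} {c : Ctx P M} {φ1 φ2 Λ1 Λ2 : Set (Label P M)} :
      Typing Γ1 g φ1 Λ1 → CTyping Γh φh Λh Γ2 c φ2 Λ2 →
      CTyping Γh φh Λh (Γ1 ∪ Γ2) (Ctx.seqR g c) (φ1 ∪ lminus φ2 Γ1) (Λ2 ∪ lminus Λ1 Γ2)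
  | parL {Γ1 Γ2 : Set P} {c : Ctx P M} {g : GC P M} {φ1 φ2 Λ1 Λ2 : Set (Label P M)} :
      CTyping Γh φh Λh Γ1 c φ1 Λ1 → Typing Γ2 g φ2 Λ2 → Γ1 ∩ Γ2 = ∅ →
      CTyping Γh φh Λh (Γ1 ∪ Γ2) (Ctx.parL c g) (φ1 ∪ φ2) (Λ1 ∪ Λ2)
  | parR {Γ1 Γ2 : Set P} {g : GC P M} {c : Ctx P M} {φ1 φ2 Λ1 Λ2 : Set (Label P M)} :
      Typing Γ1 g φ1 Λ1 → CTyping Γh φh Λh Γ2 c φ2 Λ2 → Γ1 ∩ Γ2 = ∅ →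
      CTyping Γh φh Λh (Γ1 ∪ Γ2) (Ctx.parR g c) (φ1 ∪ φ2) (Λ1 ∪ Λ2)
  | choL {Γ : Set P} {c : Ctx P M} {g : GC P M} {φ1 φ2 Λ1 Λ2 : Set (Label P M)} :
      CTyping Γh φh Λh Γ c φ1 Λ1 → Typing Γ g φ2 Λ2 → compch φ1 φ2 Γ →
      CTyping Γh φh Λh Γ (Ctx.choL c g) (φ1 ∪ φ2) (Λ1 ∪ Λ2)
  | choR {Γ : Set P} {g : GC P M} {c : Ctx P M} {φ1 φ2 Λ1 Λ2 : Set (Label P M)} :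
      Typing Γ g φ1 Λ1 → CTyping Γh φh Λh Γ c φ2 Λ2 → compch φ1 φ2 Γ →
      CTyping Γh φh Λh Γ (Ctx.choR g c) (φ1 ∪ φ2) (Λ1 ∪ Λ2)

/-! ## Refinable actions, t-ref, and refinement -/

/-- The three side conditions of the axiom schema t-ref for the refinable action
`A → m1…mn : B1,…,Bn`, represented by the initiator `A` and the nonempty list
`l = [(m1,B1),…,(mn,Bn)]` with pairwise distinct `Bi`. -/
def trefCond (Γ : Set P) (φ Λ : Set (Label P M)) (A : P) (l : List (M × P)) : Prop :=
  l ≠ [] ∧ (l.map Prod.snd).Nodup ∧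
  sbjSet φ = Γ ∧ sbjSet Λ = Γ ∧ sbjSet (φ ∩ Lout) = {A} ∧
  ∀ p ∈ l, ∃ C ∈ Γ, hat Λ p.2 = {Label.inp C p.2 p.1}

/-- `G ref A→m1…mn:B1,…,Bn`: the ground g-choreography `G` refines the refinable action
given by initiator `A` and list `l = [(m1,B1),…,(mn,Bn)]`. -/
def Refines [Nonempty P] [Nonempty M] (G : GC P M) (A : P) (l : List (M × P)) : Prop :=
  ∃ E : ES P M, gsem G = some E ∧
    sbjSet E.minLbl = {A} ∧
    ∀ x ∈ E.MaxC, ∀ p ∈ l, ∃ C ∈ parts G,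
      Label.inp C p.2 p.1 ∈ E.lbl '' (E.maxIn (E.projC x p.2))

/-! ## Multi-hole contexts -/

/-- g-choreography contexts with (numbered) holes. -/
inductive MCtx (P M : Type) where
  | hole : ℕ → MCtx P M
  | nil : MCtx P M
  | act : P → P → M → MCtx P M
  | seq : MCtx P M → MCtx P M → MCtx P M
  | par : MCtx P M → MCtx P M → MCtx P M
  | cho : MCtx P M → MCtx P M → MCtx P M

/-- The (indices of the) holes occurring in a multi-hole context. -/
def MCtx.holes : MCtx P M → List ℕ
  | .hole i => [i]
  | .nil => []
  | .act _ _ _ => []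
  | .seq c1 c2 => c1.holes ++ c2.holes
  | .par c1 c2 => c1.holes ++ c2.holes
  | .cho c1 c2 => c1.holes ++ c2.holes

/-- `C.fill g`: replace each hole `[·]i` by `g i`. -/
def MCtx.fill : MCtx P M → (ℕ → GC P M) → GC P M
  | .hole i, g => g i
  | .nil, _ => GC.nil
  | .act a b m, _ => GC.act a b m
  | .seq c1 c2, g => GC.seq (c1.fill g) (c2.fill g)
  | .par c1 c2, g => GC.par (c1.fill g) (c2.fill g)
  | .cho c1 c2, g => GC.cho (c1.fill g) (c2.fill g)

/-- Typing of multi-hole contexts in the extended type system, where hole `i` is typed by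
the axiom `(σ i).1 ⊢ [·]i : ⟨(σ i).2.1, (σ i).2.2⟩`. -/
inductive MTyping (σ : ℕ → Set P × Set (Label P M) × Set (Label P M)) :
    Set P → MCtx P M → Set (Label P M) → Set (Label P M) → Prop where
  | hole (i : ℕ) : MTyping σ (σ i).1 (MCtx.hole i) (σ i).2.1 (σ i).2.2
  | temp : MTyping σ ∅ MCtx.nil ∅ ∅
  | tint {a b : P} {m : M} (hab : a ≠ b) :
      MTyping σ {a, b} (MCtx.act a b m)
        {Label.out a b m, Label.inp a b m} {Label.out a b m, Label.inp a b m}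
  | tseq {Γ1 Γ2 : Set P} {c1 c2 : MCtx P M} {φ1 φ2 Λ1 Λ2 : Set (Label P M)} :
      MTyping σ Γ1 c1 φ1 Λ1 → MTyping σ Γ2 c2 φ2 Λ2 →
      MTyping σ (Γ1 ∪ Γ2) (MCtx.seq c1 c2) (φ1 ∪ lminus φ2 Γ1) (Λ2 ∪ lminus Λ1 Γ2)
  | tpar {Γ1 Γ2 : Set P} {c1 c2 : MCtx P M} {φ1 φ2 Λ1 Λ2 : Set (Label P M)} :
      MTyping σ Γ1 c1 φ1 Λ1 → MTyping σ Γ2 c2 φ2 Λ2 → Γ1 ∩ Γ2 = ∅ →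
      MTyping σ (Γ1 ∪ Γ2) (MCtx.par c1 c2) (φ1 ∪ φ2) (Λ1 ∪ Λ2)
  | tch {Γ : Set P} {c1 c2 : MCtx P M} {φ1 φ2 Λ1 Λ2 : Set (Label P M)} :
      MTyping σ Γ c1 φ1 Λ1 → MTyping σ Γ c2 φ2 Λ2 → compch φ1 φ2 Γ →
      MTyping σ Γ (MCtx.cho c1 c2) (φ1 ∪ φ2) (Λ1 ∪ Λ2)

/-! ### Auxiliary development for soundness of the typing system -/

section Aux
variable {P M : Type}

lemma tagL_inj : Function.Injective tagL := fun a b h => (Nat.pair_eq_pair.mp h).2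
lemma tagR_inj : Function.Injective tagR := fun a b h => (Nat.pair_eq_pair.mp h).2
lemma tagL_ne_tagR (a b : ℕ) : tagL a ≠ tagR b := fun h => by
  simpa [tagL, tagR] using (Nat.pair_eq_pair.mp h).1
lemma tagL_ne_tagC (a k b : ℕ) : tagL a ≠ tagC k b := fun h => by
  simpa [tagL, tagC] using (Nat.pair_eq_pair.mp h).1
lemma tagC_eq_tagC {k e k' e' : ℕ} : tagC k e = tagC k' e' ↔ k = k' ∧ e = e' := by
  unfold tagC
  rw [Nat.pair_eq_pair, Nat.pair_eq_pair]
  tauto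

lemma sum_two_pow_inj : ∀ (s t : Finset ℕ), (∑ k ∈ s, 2^k) = (∑ k ∈ t, 2^k) → s = t := by
  intro s
  induction s using Finset.strongInduction with
  | _ s ih =>
    intro t h
    rcases s.eq_empty_or_nonempty with rfl | hs
    · rcases t.eq_empty_or_nonempty with rfl | ht
      · rfl
      obtain ⟨a, ha⟩ := ht
      have h2 : 2^a ≤ ∑ k ∈ t, 2^k := Finset.single_le_sum (fun i _ => Nat.zero_le _) ha
      have := Nat.one_le_two_pow (n := a)
      rw [Finset.sum_empty] at h
      omega
    rcases t.eq_empty_or_nonempty with rfl | ht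
    · obtain ⟨a, ha⟩ := hs
      have h2 : 2^a ≤ ∑ k ∈ s, 2^k := Finset.single_le_sum (fun i _ => Nat.zero_le _) ha
      have := Nat.one_le_two_pow (n := a)
      rw [Finset.sum_empty] at h
      omega
    have hamem := s.max'_mem hs
    have hbmem := t.max'_mem ht
    have h1 : 2 ^ s.max' hs ≤ ∑ k ∈ s, 2^k :=
      Finset.single_le_sum (fun i _ => Nat.zero_le _) hamem
    have h2 : 2 ^ t.max' ht ≤ ∑ k ∈ t, 2^k :=
      Finset.single_le_sum (fun i _ => Nat.zero_le _) hbmem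
    have h3 : (∑ k ∈ s, 2^k) < 2^(s.max' hs + 1) :=
      Nat.geomSum_lt le_rfl (fun k hk => Nat.lt_succ_of_le (s.le_max' k hk))
    have h4 : (∑ k ∈ t, 2^k) < 2^(t.max' ht + 1) :=
      Nat.geomSum_lt le_rfl (fun k hk => Nat.lt_succ_of_le (t.le_max' k hk))
    have hab : s.max' hs = t.max' ht := by
      have l1 : s.max' hs < t.max' ht + 1 :=
        (Nat.pow_lt_pow_iff_right one_lt_two).mp (lt_of_le_of_lt (h1.trans_eq h) h4)
      have l2 : t.max' ht < s.max' hs + 1 :=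
        (Nat.pow_lt_pow_iff_right one_lt_two).mp (lt_of_le_of_lt (h2.trans_eq h.symm) h3)
      omega
    have e1 : (∑ k ∈ s.erase (s.max' hs), 2^k) + 2 ^ (s.max' hs) = ∑ k ∈ s, 2^k :=
      Finset.sum_erase_add _ _ hamem
    have e2 : (∑ k ∈ t.erase (t.max' ht), 2^k) + 2 ^ (t.max' ht) = ∑ k ∈ t, 2^k :=
      Finset.sum_erase_add _ _ hbmem
    have hsum : (∑ k ∈ s.erase (s.max' hs), 2^k) = ∑ k ∈ t.erase (t.max' ht), 2^k := by
      have e3 : (2:ℕ) ^ s.max' hs = 2 ^ t.max' ht := by rw [hab]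
      omega
    have herase := ih _ (Finset.erase_ssubset hamem) _ hsum
    calc s = insert (s.max' hs) (s.erase (s.max' hs)) := (Finset.insert_erase hamem).symm
      _ = insert (t.max' ht) (t.erase (t.max' ht)) := by rw [herase, hab]
      _ = t := Finset.insert_erase hbmem

lemma encSet_inj {x y : Set ℕ} (hx : x.Finite) (hy : y.Finite)
    (h : encSet x = encSet y) : x = y := by
  unfold encSet at h
  rw [dif_pos hx, dif_pos hy] at h
  have := sum_two_pow_inj _ _ h
  rw [← hx.coe_toFinset, ← hy.coe_toFinset, this]

end Aux

section Sound
variable {P M : Type}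

lemma lbl_tensor_tagL (E1 E2 : ES P M) (e : ℕ) : (esTensor E1 E2).lbl (tagL e) = E1.lbl e := by
  simp [esTensor, tagL, Nat.unpair_pair]
lemma lbl_tensor_tagR (E1 E2 : ES P M) (e : ℕ) : (esTensor E1 E2).lbl (tagR e) = E2.lbl e := by
  simp [esTensor, tagR, Nat.unpair_pair]
lemma lbl_sum_tagL (E1 E2 : ES P M) (e : ℕ) : (esSum E1 E2).lbl (tagL e) = E1.lbl e :=
  lbl_tensor_tagL E1 E2 e
lemma lbl_sum_tagR (E1 E2 : ES P M) (e : ℕ) : (esSum E1 E2).lbl (tagR e) = E2.lbl e :=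
  lbl_tensor_tagR E1 E2 e
lemma lbl_seq_tagL (E1 E2 : ES P M) (e : ℕ) : (esSeq E1 E2).lbl (tagL e) = E1.lbl e := by
  simp [esSeq, tagL, Nat.unpair_pair]
lemma lbl_seq_tagC (E1 E2 : ES P M) (k e : ℕ) : (esSeq E1 E2).lbl (tagC k e) = E2.lbl e := by
  simp [esSeq, tagC, Nat.unpair_pair]

lemma config_subset {E : ES P M} {x : Set ℕ} (h : E.Config x) : x ⊆ E.ev := h.1
lemma config_dc {E : ES P M} {x : Set ℕ} (h : E.Config x) :
    ∀ e ∈ x, ∀ f ∈ E.ev, E.le f e → f ∈ x := h.2.1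
lemma config_cf {E : ES P M} {x : Set ℕ} (h : E.Config x) :
    ∀ e ∈ x, ∀ f ∈ x, ¬ E.conf e f := h.2.2

/-- The invariants of the soundness proof. -/
structure Good (Γ : Set P) (φ : Set (Label P M)) (E : ES P M) : Prop where
  fin : E.ev.Finite
  sbj : sbjSet E.lblSet = Γ
  minl : ∀ A, minLblP E A = hat φ A
  maxne : E.MaxC.Nonempty
  hits : ∀ A ∈ Γ, ∀ x ∈ E.MaxC, ∃ e ∈ x, (E.lbl e).sbj = A
  sym : ∀ u v, E.conf u v → E.conf v u

namespace Good
variable {Γ : Set P} {φ : Set (Label P M)} {E : ES P M}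

lemma mem_gamma (h : Good Γ φ E) {e : ℕ} (he : e ∈ E.ev) : (E.lbl e).sbj ∈ Γ := by
  rw [← h.sbj]; exact ⟨E.lbl e, ⟨e, he, rfl⟩, rfl⟩

lemma ev_of_gamma (h : Good Γ φ E) {A : P} (hA : A ∈ Γ) : ∃ e ∈ E.ev, (E.lbl e).sbj = A := by
  rw [← h.sbj] at hA
  obtain ⟨l, ⟨e, he, rfl⟩, rfl⟩ := hA
  exact ⟨e, he, rfl⟩

lemma maxC_ne (h : Good Γ φ E) {y : Set ℕ} (hy : y ∈ E.MaxC) (hne : E.ev.Nonempty) :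
    y.Nonempty := by
  obtain ⟨e, he⟩ := hne
  obtain ⟨f, hf, _⟩ := h.hits _ (h.mem_gamma he) y hy
  exact ⟨f, hf⟩

lemma ev_empty (h : Good Γ φ E) (hΓ : Γ = ∅) : E.ev = ∅ := by
  rcases Set.eq_empty_or_nonempty E.ev with he | he
  · exact he
  · obtain ⟨e, he⟩ := he
    exact absurd (h.mem_gamma he) (by simp [hΓ])

lemma proj_ev_empty (h : Good Γ φ E) {A : P} (hA : A ∉ Γ) : (E.proj A).ev = ∅ := by
  ext e
  simp only [ES.proj, Set.mem_setOf_eq, Set.mem_empty_iff_false, iff_false, not_and]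
  intro he hs
  exact hA (hs ▸ h.mem_gamma he)

lemma minLblP_empty (h : Good Γ φ E) {A : P} (hA : A ∉ Γ) : minLblP E A = ∅ := by
  have h0 := h.proj_ev_empty hA
  unfold minLblP ES.minLbl ES.minEv ES.minIn
  rw [h0]
  simp

lemma hat_empty (h : Good Γ φ E) {A : P} (hA : A ∉ Γ) : hat φ A = ∅ :=
  (h.minl A).symm.trans (h.minLblP_empty hA)

end Good

lemma hat_union (s t : Set (Label P M)) (A : P) : hat (s ∪ t) A = hat s A ∪ hat t A := by
  ext l; simp only [hat, Set.mem_union, Set.mem_setOf_eq]; tauto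

lemma hat_lminus_mem (φ : Set (Label P M)) {Γ : Set P} {A : P} (hA : A ∈ Γ) :
    hat (lminus φ Γ) A = ∅ := by
  ext l
  simp only [hat, lminus, Set.mem_setOf_eq, Set.mem_empty_iff_false, iff_false, not_and]
  rintro ⟨_, hl⟩ rfl
  exact hl hA

lemma hat_lminus_not_mem (φ : Set (Label P M)) {Γ : Set P} {A : P} (hA : A ∉ Γ) :
    hat (lminus φ Γ) A = hat φ A := by
  ext l
  simp only [hat, lminus, Set.mem_setOf_eq]
  constructor
  · rintro ⟨⟨h1, _⟩, h2⟩; exact ⟨h1, h2⟩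
  · rintro ⟨h1, h2⟩; exact ⟨⟨h1, fun hc => hA (h2 ▸ hc)⟩, h2⟩

lemma config_esEmpty [Nonempty P] [Nonempty M] :
    (esEmpty : ES P M).Config ∅ := by
  refine ⟨by simp, ?_, ?_⟩ <;> simp

lemma good_empty [Nonempty P] [Nonempty M] : Good (∅ : Set P) (∅ : Set (Label P M)) esEmpty := by
  refine ⟨?_, ?_, ?_, ?_, ?_, fun u v h => h⟩
  · simp [esEmpty]
  · simp [sbjSet, ES.lblSet, esEmpty]
  · intro A
    have h0 : ((esEmpty : ES P M).proj A).ev = ∅ := by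
      simp [ES.proj, esEmpty]
    unfold minLblP ES.minLbl ES.minEv ES.minIn
    rw [h0]
    simp [hat]
  · refine ⟨∅, config_esEmpty, fun y hy _ => ?_⟩
    have := hy.1
    simpa [esEmpty, Set.subset_empty_iff] using this
  · simp

lemma act_maxC {a b : P} {m : M} : (esAct a b m).MaxC = {({0, 1} : Set ℕ)} := by
  have hcfg : (esAct a b m).Config {0, 1} := by
    refine ⟨by simp [esAct], ?_, ?_⟩
    · intro e _ f hf _
      simpa [esAct] using hf
    · intro e _ f _ hc
      exact hc
  ext z
  simp only [ES.MaxC, Set.mem_setOf_eq, Set.mem_singleton_iff]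
  constructor
  · rintro ⟨hz, hmax⟩
    exact (hmax _ hcfg (hz.1)).symm ▸ rfl
  · rintro rfl
    exact ⟨hcfg, fun y hy hsub => Set.Subset.antisymm hy.1 hsub⟩

lemma good_act {a b : P} (m : M) (hab : a ≠ b) :
    Good {a, b} {Label.out a b m, Label.inp a b m} (esAct a b m) := by
  have hlbl0 : (esAct a b m).lbl 0 = Label.out a b m := by simp [esAct]
  have hlbl1 : (esAct a b m).lbl 1 = Label.inp a b m := by simp [esAct]
  refine ⟨?_, ?_, ?_, ?_, ?_, fun u v h => h⟩
  · exact (Set.finite_singleton 1).insert 0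
  · ext A
    simp only [sbjSet, ES.lblSet, esAct, Set.image_insert_eq, Set.image_singleton]
    norm_num
    simp [Label.sbj]
  · intro A
    ext l
    simp only [minLblP, ES.minLbl, ES.minEv, ES.minIn, ES.proj, hat, Set.mem_image,
      Set.mem_setOf_eq, Set.mem_insert_iff, Set.mem_singleton_iff]
    constructor
    · rintro ⟨e, ⟨⟨hev, hsbj⟩, -⟩, rfl⟩
      have he : e = 0 ∨ e = 1 := by simpa [esAct] using hev
      rcases he with rfl | rfl
      · rw [hlbl0] at hsbj ⊢
        exact ⟨Or.inl rfl, hsbj⟩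
      · rw [hlbl1] at hsbj ⊢
        exact ⟨Or.inr rfl, hsbj⟩
    · rintro ⟨rfl | rfl, hsbj⟩
      · refine ⟨0, ⟨⟨⟨by simp [esAct], by rw [hlbl0]; exact hsbj⟩, ?_⟩, hlbl0⟩⟩
        rintro f ⟨hfev, hfsbj⟩ ⟨hle, -⟩
        simp only [esAct] at hle
        omega
      · refine ⟨1, ⟨⟨⟨by simp [esAct], by rw [hlbl1]; exact hsbj⟩, ?_⟩, hlbl1⟩⟩
        rintro f ⟨hfev, hfsbj⟩ ⟨hle, -⟩
        have hf : f = 0 ∨ f = 1 := by simp only [esAct] at hle; omega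
        rcases hf with rfl | rfl
        · rw [hlbl0] at hfsbj
          rw [← hsbj] at hfsbj
          exact absurd hfsbj hab
        · rfl
  · exact ⟨{0, 1}, by rw [act_maxC]; rfl⟩
  · intro A hA x hx
    rw [act_maxC] at hx
    rcases hx with rfl
    rcases hA with rfl | rfl
    · exact ⟨0, by simp, by rw [hlbl0]; rfl⟩
    · exact ⟨1, by simp, by rw [hlbl1]; rfl⟩

section Tensor
variable {E1 E2 : ES P M}

lemma sbjSet_union (s t : Set (Label P M)) : sbjSet (s ∪ t) = sbjSet s ∪ sbjSet t :=
  Set.image_union _ _ _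

lemma mem_ev_tensor {u : ℕ} :
    u ∈ (esTensor E1 E2).ev ↔ (∃ e ∈ E1.ev, u = tagL e) ∨ (∃ e ∈ E2.ev, u = tagR e) := by
  simp only [esTensor, Set.mem_union, Set.mem_image]
  constructor
  · rintro (⟨e, he, rfl⟩ | ⟨e, he, rfl⟩)
    · exact Or.inl ⟨e, he, rfl⟩
    · exact Or.inr ⟨e, he, rfl⟩
  · rintro (⟨e, he, rfl⟩ | ⟨e, he, rfl⟩)
    · exact Or.inl ⟨e, he, rfl⟩
    · exact Or.inr ⟨e, he, rfl⟩

lemma config_tensor_mk {x y : Set ℕ} (hx : E1.Config x) (hy : E2.Config y) :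
    (esTensor E1 E2).Config (tagL '' x ∪ tagR '' y) := by
  refine ⟨?_, ?_, ?_⟩
  · rintro u (⟨e, he, rfl⟩ | ⟨e, he, rfl⟩)
    · exact Set.mem_union_left _ ⟨e, hx.1 he, rfl⟩
    · exact Set.mem_union_right _ ⟨e, hy.1 he, rfl⟩
  · rintro u (⟨e, he, rfl⟩ | ⟨e, he, rfl⟩) f hf hle
    · rcases hle with ⟨a, ha, b, hb, hab, rfl, heq⟩ | ⟨a, ha, b, hb, hab, rfl, heq⟩
      · obtain rfl := tagL_inj heq
        exact Set.mem_union_left _ ⟨a, config_dc hx _ he _ ha hab, rfl⟩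
      · exact absurd heq (tagL_ne_tagR _ _)
    · rcases hle with ⟨a, ha, b, hb, hab, rfl, heq⟩ | ⟨a, ha, b, hb, hab, rfl, heq⟩
      · exact absurd heq.symm (tagL_ne_tagR _ _)
      · obtain rfl := tagR_inj heq
        exact Set.mem_union_right _ ⟨a, config_dc hy _ he _ ha hab, rfl⟩
  · rintro u (⟨e, he, rfl⟩ | ⟨e, he, rfl⟩) v (⟨f, hf, rfl⟩ | ⟨f, hf, rfl⟩) hc
    · rcases hc with ⟨a, ha, b, hb, hab, hu, hv⟩ | ⟨a, ha, b, hb, hab, hu, hv⟩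
      · obtain rfl := tagL_inj hu; obtain rfl := tagL_inj hv
        exact config_cf hx _ he _ hf hab
      · exact absurd hu (tagL_ne_tagR _ _)
    · rcases hc with ⟨a, ha, b, hb, hab, hu, hv⟩ | ⟨a, ha, b, hb, hab, hu, hv⟩
      · exact absurd hv.symm (tagL_ne_tagR _ _)
      · exact absurd hu (tagL_ne_tagR _ _)
    · rcases hc with ⟨a, ha, b, hb, hab, hu, hv⟩ | ⟨a, ha, b, hb, hab, hu, hv⟩
      · exact absurd hu.symm (tagL_ne_tagR _ _)
      · exact absurd hv (tagL_ne_tagR _ _)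
    · rcases hc with ⟨a, ha, b, hb, hab, hu, hv⟩ | ⟨a, ha, b, hb, hab, hu, hv⟩
      · exact absurd hu.symm (tagL_ne_tagR _ _)
      · obtain rfl := tagR_inj hu; obtain rfl := tagR_inj hv
        exact config_cf hy _ he _ hf hab

lemma config_tensor_decomp {z : Set ℕ} (hz : (esTensor E1 E2).Config z) :
    E1.Config {e ∈ E1.ev | tagL e ∈ z} ∧ E2.Config {e ∈ E2.ev | tagR e ∈ z} ∧
      z = tagL '' {e ∈ E1.ev | tagL e ∈ z} ∪ tagR '' {e ∈ E2.ev | tagR e ∈ z} := by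
  refine ⟨⟨fun e he => he.1, ?_, ?_⟩, ⟨fun e he => he.1, ?_, ?_⟩, ?_⟩
  · intro e he f hf hle
    refine ⟨hf, config_dc hz _ he.2 (tagL f) (mem_ev_tensor.mpr (Or.inl ⟨f, hf, rfl⟩)) ?_⟩
    exact Or.inl ⟨f, hf, e, he.1, hle, rfl, rfl⟩
  · intro e he f hf hc
    exact config_cf hz _ he.2 _ hf.2 (Or.inl ⟨e, he.1, f, hf.1, hc, rfl, rfl⟩)
  · intro e he f hf hle
    refine ⟨hf, config_dc hz _ he.2 (tagR f) (mem_ev_tensor.mpr (Or.inr ⟨f, hf, rfl⟩)) ?_⟩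
    exact Or.inr ⟨f, hf, e, he.1, hle, rfl, rfl⟩
  · intro e he f hf hc
    exact config_cf hz _ he.2 _ hf.2 (Or.inr ⟨e, he.1, f, hf.1, hc, rfl, rfl⟩)
  · ext u
    constructor
    · intro hu
      rcases mem_ev_tensor.mp (hz.1 hu) with ⟨e, he, rfl⟩ | ⟨e, he, rfl⟩
      · exact Set.mem_union_left _ ⟨e, ⟨he, hu⟩, rfl⟩
      · exact Set.mem_union_right _ ⟨e, ⟨he, hu⟩, rfl⟩
    · rintro (⟨e, he, rfl⟩ | ⟨e, he, rfl⟩)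
      · exact he.2
      · exact he.2

lemma maxC_tensor {z : Set ℕ} :
    z ∈ (esTensor E1 E2).MaxC ↔
      ∃ x ∈ E1.MaxC, ∃ y ∈ E2.MaxC, z = tagL '' x ∪ tagR '' y := by
  constructor
  · rintro ⟨hz, hmax⟩
    obtain ⟨hzl, hzr, hrep⟩ := config_tensor_decomp hz
    refine ⟨_, ⟨hzl, ?_⟩, _, ⟨hzr, ?_⟩, hrep⟩
    · intro w hw hsub
      have heq := hmax _ (config_tensor_mk hw hzr)
        (by conv_lhs => rw [hrep]
            exact Set.union_subset_union_left _ (Set.image_mono hsub))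
      refine Set.Subset.antisymm ?_ hsub
      intro e hew
      have hmem : tagL e ∈ z := by
        rw [← heq]; exact Set.mem_union_left _ ⟨e, hew, rfl⟩
      exact ⟨hw.1 hew, hmem⟩
    · intro w hw hsub
      have heq := hmax _ (config_tensor_mk hzl hw)
        (by conv_lhs => rw [hrep]
            exact Set.union_subset_union_right _ (Set.image_mono hsub))
      refine Set.Subset.antisymm ?_ hsub
      intro e hew
      have hmem : tagR e ∈ z := by
        rw [← heq]; exact Set.mem_union_right _ ⟨e, hew, rfl⟩
      exact ⟨hw.1 hew, hmem⟩
  · rintro ⟨x, hx, y, hy, rfl⟩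
    refine ⟨config_tensor_mk hx.1 hy.1, ?_⟩
    intro z' hz' hsub
    obtain ⟨hzl', hzr', hrep'⟩ := config_tensor_decomp hz'
    have hxsub : x ⊆ {e ∈ E1.ev | tagL e ∈ z'} :=
      fun e he => ⟨hx.1.1 he, hsub (Set.mem_union_left _ ⟨e, he, rfl⟩)⟩
    have hysub : y ⊆ {e ∈ E2.ev | tagR e ∈ z'} :=
      fun e he => ⟨hy.1.1 he, hsub (Set.mem_union_right _ ⟨e, he, rfl⟩)⟩
    rw [hrep', hx.2 _ hzl' hxsub, hy.2 _ hzr' hysub]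

lemma lblSet_tensor : (esTensor E1 E2).lblSet = E1.lblSet ∪ E2.lblSet := by
  ext l
  simp only [ES.lblSet, Set.mem_image, Set.mem_union]
  constructor
  · rintro ⟨u, hu, rfl⟩
    rcases mem_ev_tensor.mp hu with ⟨e, he, rfl⟩ | ⟨e, he, rfl⟩
    · exact Or.inl ⟨e, he, (lbl_tensor_tagL E1 E2 e).symm⟩
    · exact Or.inr ⟨e, he, (lbl_tensor_tagR E1 E2 e).symm⟩
  · rintro (⟨e, he, rfl⟩ | ⟨e, he, rfl⟩)
    · exact ⟨tagL e, mem_ev_tensor.mpr (Or.inl ⟨e, he, rfl⟩), lbl_tensor_tagL E1 E2 e⟩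
    · exact ⟨tagR e, mem_ev_tensor.mpr (Or.inr ⟨e, he, rfl⟩), lbl_tensor_tagR E1 E2 e⟩

lemma minLblP_tensor (A : P) :
    minLblP (esTensor E1 E2) A = minLblP E1 A ∪ minLblP E2 A := by
  ext l
  simp only [minLblP, ES.minLbl, ES.minEv, ES.minIn, ES.proj, Set.mem_image,
    Set.mem_setOf_eq, Set.mem_union]
  constructor
  · rintro ⟨u, ⟨⟨huev, husbj⟩, humin⟩, rfl⟩
    rcases mem_ev_tensor.mp huev with ⟨e, he, rfl⟩ | ⟨e, he, rfl⟩
    · rw [lbl_tensor_tagL] at husbj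
      refine Or.inl ⟨e, ⟨⟨he, husbj⟩, ?_⟩, (lbl_tensor_tagL E1 E2 e).symm⟩
      rintro f ⟨hfev, hfsbj⟩ ⟨hle, -, -⟩
      have := humin (tagL f)
        ⟨mem_ev_tensor.mpr (Or.inl ⟨f, hfev, rfl⟩), by rw [lbl_tensor_tagL]; exact hfsbj⟩
        ⟨Or.inl ⟨f, hfev, e, he, hle, rfl, rfl⟩,
          ⟨mem_ev_tensor.mpr (Or.inl ⟨f, hfev, rfl⟩), by rw [lbl_tensor_tagL]; exact hfsbj⟩,
          ⟨huev, by rw [lbl_tensor_tagL]; exact husbj⟩⟩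
      exact tagL_inj this
    · rw [lbl_tensor_tagR] at husbj
      refine Or.inr ⟨e, ⟨⟨he, husbj⟩, ?_⟩, (lbl_tensor_tagR E1 E2 e).symm⟩
      rintro f ⟨hfev, hfsbj⟩ ⟨hle, -, -⟩
      have := humin (tagR f)
        ⟨mem_ev_tensor.mpr (Or.inr ⟨f, hfev, rfl⟩), by rw [lbl_tensor_tagR]; exact hfsbj⟩
        ⟨Or.inr ⟨f, hfev, e, he, hle, rfl, rfl⟩,
          ⟨mem_ev_tensor.mpr (Or.inr ⟨f, hfev, rfl⟩), by rw [lbl_tensor_tagR]; exact hfsbj⟩,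
          ⟨huev, by rw [lbl_tensor_tagR]; exact husbj⟩⟩
      exact tagR_inj this
  · rintro (⟨e, ⟨⟨hev, hsbj⟩, hmin⟩, rfl⟩ | ⟨e, ⟨⟨hev, hsbj⟩, hmin⟩, rfl⟩)
    · refine ⟨tagL e, ⟨⟨mem_ev_tensor.mpr (Or.inl ⟨e, hev, rfl⟩),
        by rw [lbl_tensor_tagL]; exact hsbj⟩, ?_⟩, lbl_tensor_tagL E1 E2 e⟩
      rintro f ⟨hfev, hfsbj⟩ ⟨hle, -, -⟩
      rcases hle with ⟨a, ha, b, hb, hab, rfl, heq⟩ | ⟨a, ha, b, hb, hab, rfl, heq⟩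
      · obtain rfl := tagL_inj heq
        rw [lbl_tensor_tagL] at hfsbj
        obtain rfl := hmin a ⟨ha, hfsbj⟩ ⟨hab, ⟨ha, hfsbj⟩, hev, hsbj⟩
        rfl
      · exact absurd heq (tagL_ne_tagR _ _)
    · refine ⟨tagR e, ⟨⟨mem_ev_tensor.mpr (Or.inr ⟨e, hev, rfl⟩),
        by rw [lbl_tensor_tagR]; exact hsbj⟩, ?_⟩, lbl_tensor_tagR E1 E2 e⟩
      rintro f ⟨hfev, hfsbj⟩ ⟨hle, -, -⟩
      rcases hle with ⟨a, ha, b, hb, hab, rfl, heq⟩ | ⟨a, ha, b, hb, hab, rfl, heq⟩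
      · exact absurd heq.symm (tagL_ne_tagR _ _)
      · obtain rfl := tagR_inj heq
        rw [lbl_tensor_tagR] at hfsbj
        obtain rfl := hmin a ⟨ha, hfsbj⟩ ⟨hab, ⟨ha, hfsbj⟩, hev, hsbj⟩
        rfl

lemma lblSet_disjoint {Γ1 Γ2 : Set P} {φ1 φ2 : Set (Label P M)}
    (h1 : Good Γ1 φ1 E1) (h2 : Good Γ2 φ2 E2) (hd : Γ1 ∩ Γ2 = ∅) :
    Disjoint E1.lblSet E2.lblSet := by
  rw [Set.disjoint_left]
  intro l hl1 hl2
  have a1 : l.sbj ∈ Γ1 := by rw [← h1.sbj]; exact ⟨l, hl1, rfl⟩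
  have a2 : l.sbj ∈ Γ2 := by rw [← h2.sbj]; exact ⟨l, hl2, rfl⟩
  have : l.sbj ∈ Γ1 ∩ Γ2 := ⟨a1, a2⟩
  rw [hd] at this
  exact this

lemma good_tensor {Γ1 Γ2 : Set P} {φ1 φ2 : Set (Label P M)}
    (h1 : Good Γ1 φ1 E1) (h2 : Good Γ2 φ2 E2) :
    Good (Γ1 ∪ Γ2) (φ1 ∪ φ2) (esTensor E1 E2) := by
  refine ⟨?_, ?_, ?_, ?_, ?_, ?_⟩
  · exact ((h1.fin.image _).union (h2.fin.image _))
  · rw [lblSet_tensor, sbjSet_union, h1.sbj, h2.sbj]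
  · intro A
    rw [minLblP_tensor, h1.minl, h2.minl, hat_union]
  · obtain ⟨x, hx⟩ := h1.maxne
    obtain ⟨y, hy⟩ := h2.maxne
    exact ⟨_, maxC_tensor.mpr ⟨x, hx, y, hy, rfl⟩⟩
  · intro A hA z hz
    obtain ⟨x, hx, y, hy, rfl⟩ := maxC_tensor.mp hz
    rcases hA with hA | hA
    · obtain ⟨e, he, hsbj⟩ := h1.hits A hA x hx
      exact ⟨tagL e, Set.mem_union_left _ ⟨e, he, rfl⟩, by rw [lbl_tensor_tagL]; exact hsbj⟩
    · obtain ⟨e, he, hsbj⟩ := h2.hits A hA y hy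
      exact ⟨tagR e, Set.mem_union_right _ ⟨e, he, rfl⟩, by rw [lbl_tensor_tagR]; exact hsbj⟩
  · rintro u v (⟨a, ha, b, hb, hab, rfl, rfl⟩ | ⟨a, ha, b, hb, hab, rfl, rfl⟩)
    · exact Or.inl ⟨b, hb, a, ha, h1.sym _ _ hab, rfl, rfl⟩
    · exact Or.inr ⟨b, hb, a, ha, h2.sym _ _ hab, rfl, rfl⟩

end Tensor

section Sum
variable {E1 E2 : ES P M}

lemma config_sum_to_tensor {z : Set ℕ} (hz : (esSum E1 E2).Config z) :
    (esTensor E1 E2).Config z :=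
  ⟨hz.1, hz.2.1, fun e he f hf hc => hz.2.2 e he f hf (Or.inl hc)⟩

lemma config_sum_pure {z : Set ℕ} (hz : (esSum E1 E2).Config z) {e f : ℕ}
    (he : e ∈ E1.ev) (hf : f ∈ E2.ev) (hel : tagL e ∈ z) (hfr : tagR f ∈ z) : False :=
  hz.2.2 _ hel _ hfr (Or.inr ⟨e, he, f, hf, Or.inl ⟨rfl, rfl⟩⟩)

lemma config_sum_mkL {x : Set ℕ} (hx : E1.Config x) : (esSum E1 E2).Config (tagL '' x) := by
  refine ⟨?_, ?_, ?_⟩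
  · rintro u ⟨e, he, rfl⟩
    exact Set.mem_union_left _ ⟨e, hx.1 he, rfl⟩
  · rintro u ⟨e, he, rfl⟩ f hf hle
    rcases hle with ⟨a, ha, b, hb, hab, rfl, heq⟩ | ⟨a, ha, b, hb, hab, rfl, heq⟩
    · obtain rfl := tagL_inj heq
      exact ⟨a, config_dc hx _ he _ ha hab, rfl⟩
    · exact absurd heq (tagL_ne_tagR _ _)
  · rintro u ⟨e, he, rfl⟩ v ⟨f, hf, rfl⟩ hc
    rcases hc with (⟨a, ha, b, hb, hab, hu, hv⟩ | ⟨a, ha, b, hb, hab, hu, hv⟩) |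
      ⟨a, ha, b, hb, ⟨hu, hv⟩ | ⟨hu, hv⟩⟩
    · obtain rfl := tagL_inj hu; obtain rfl := tagL_inj hv
      exact config_cf hx _ he _ hf hab
    · exact absurd hu (tagL_ne_tagR _ _)
    · exact absurd hv (tagL_ne_tagR _ _)
    · exact absurd hu (tagL_ne_tagR _ _)

lemma config_sum_mkR {y : Set ℕ} (hy : E2.Config y) : (esSum E1 E2).Config (tagR '' y) := by
  refine ⟨?_, ?_, ?_⟩
  · rintro u ⟨e, he, rfl⟩
    exact Set.mem_union_right _ ⟨e, hy.1 he, rfl⟩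
  · rintro u ⟨e, he, rfl⟩ f hf hle
    rcases hle with ⟨a, ha, b, hb, hab, rfl, heq⟩ | ⟨a, ha, b, hb, hab, rfl, heq⟩
    · exact absurd heq.symm (tagL_ne_tagR _ _)
    · obtain rfl := tagR_inj heq
      exact ⟨a, config_dc hy _ he _ ha hab, rfl⟩
  · rintro u ⟨e, he, rfl⟩ v ⟨f, hf, rfl⟩ hc
    rcases hc with (⟨a, ha, b, hb, hab, hu, hv⟩ | ⟨a, ha, b, hb, hab, hu, hv⟩) |
      ⟨a, ha, b, hb, ⟨hu, hv⟩ | ⟨hu, hv⟩⟩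
    · exact absurd hu.symm (tagL_ne_tagR _ _)
    · obtain rfl := tagR_inj hu; obtain rfl := tagR_inj hv
      exact config_cf hy _ he _ hf hab
    · exact absurd hu.symm (tagL_ne_tagR _ _)
    · exact absurd hv.symm (tagL_ne_tagR _ _)

lemma maxC_sum_cases {z : Set ℕ} (hz : z ∈ (esSum E1 E2).MaxC) :
    (∃ x ∈ E1.MaxC, z = tagL '' x) ∨ (∃ y ∈ E2.MaxC, z = tagR '' y) := by
  obtain ⟨hzc, hmax⟩ := hz
  obtain ⟨hzl, hzr, hrep⟩ := config_tensor_decomp (config_sum_to_tensor hzc)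
  by_cases hR : {e ∈ E2.ev | tagR e ∈ z} = ∅
  · left
    have hrepL : z = tagL '' {e ∈ E1.ev | tagL e ∈ z} := by
      conv_lhs => rw [hrep]
      rw [hR]; simp
    refine ⟨_, ⟨hzl, ?_⟩, hrepL⟩
    intro w hw hsub
    have heq := hmax _ (config_sum_mkL hw)
      (by conv_lhs => rw [hrepL]
          exact Set.image_mono hsub)
    refine Set.Subset.antisymm ?_ hsub
    intro e hew
    have hmem : tagL e ∈ z := by rw [← heq]; exact ⟨e, hew, rfl⟩
    exact ⟨hw.1 hew, hmem⟩
  · right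
    obtain ⟨f, hf⟩ := Set.nonempty_iff_ne_empty.mpr hR
    have hL : {e ∈ E1.ev | tagL e ∈ z} = ∅ := by
      by_contra hL
      obtain ⟨e, he⟩ := Set.nonempty_iff_ne_empty.mpr hL
      exact config_sum_pure hzc he.1 hf.1 he.2 hf.2
    have hrepR : z = tagR '' {e ∈ E2.ev | tagR e ∈ z} := by
      conv_lhs => rw [hrep]
      rw [hL]; simp
    refine ⟨_, ⟨hzr, ?_⟩, hrepR⟩
    intro w hw hsub
    have heq := hmax _ (config_sum_mkR hw)
      (by conv_lhs => rw [hrepR]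
          exact Set.image_mono hsub)
    refine Set.Subset.antisymm ?_ hsub
    intro e hew
    have hmem : tagR e ∈ z := by rw [← heq]; exact ⟨e, hew, rfl⟩
    exact ⟨hw.1 hew, hmem⟩

lemma maxC_sum_memL {x : Set ℕ} (hx : x ∈ E1.MaxC) (hor : x.Nonempty ∨ E2.ev = ∅) :
    tagL '' x ∈ (esSum E1 E2).MaxC := by
  refine ⟨config_sum_mkL hx.1, ?_⟩
  intro z hz hsub
  obtain ⟨hzl, hzr, hrep⟩ := config_tensor_decomp (config_sum_to_tensor hz)
  have hR : {e ∈ E2.ev | tagR e ∈ z} = ∅ := by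
    rcases hor with ⟨e0, he0⟩ | hev2
    · by_contra hR
      obtain ⟨f, hf⟩ := Set.nonempty_iff_ne_empty.mpr hR
      exact config_sum_pure hz (hx.1.1 he0) hf.1 (hsub ⟨e0, he0, rfl⟩) hf.2
    · ext e
      simp [hev2]
  have hxs : x ⊆ {e ∈ E1.ev | tagL e ∈ z} := fun e he => ⟨hx.1.1 he, hsub ⟨e, he, rfl⟩⟩
  rw [hrep, hR, hx.2 _ hzl hxs]
  simp

lemma maxC_sum_memR {y : Set ℕ} (hy : y ∈ E2.MaxC) (hor : y.Nonempty ∨ E1.ev = ∅) :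
    tagR '' y ∈ (esSum E1 E2).MaxC := by
  refine ⟨config_sum_mkR hy.1, ?_⟩
  intro z hz hsub
  obtain ⟨hzl, hzr, hrep⟩ := config_tensor_decomp (config_sum_to_tensor hz)
  have hL : {e ∈ E1.ev | tagL e ∈ z} = ∅ := by
    rcases hor with ⟨e0, he0⟩ | hev1
    · by_contra hL
      obtain ⟨f, hf⟩ := Set.nonempty_iff_ne_empty.mpr hL
      exact config_sum_pure hz hf.1 (hy.1.1 he0) hf.2 (hsub ⟨e0, he0, rfl⟩)
    · ext e
      simp [hev1]
  have hys : y ⊆ {e ∈ E2.ev | tagR e ∈ z} := fun e he => ⟨hy.1.1 he, hsub ⟨e, he, rfl⟩⟩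
  rw [hrep, hL, hy.2 _ hzr hys]
  simp

lemma good_sum {Γ : Set P} {φ1 φ2 : Set (Label P M)}
    (h1 : Good Γ φ1 E1) (h2 : Good Γ φ2 E2) :
    Good Γ (φ1 ∪ φ2) (esSum E1 E2) := by
  refine ⟨?_, ?_, ?_, ?_, ?_, ?_⟩
  · exact ((h1.fin.image _).union (h2.fin.image _))
  · rw [show (esSum E1 E2).lblSet = (esTensor E1 E2).lblSet from rfl,
      lblSet_tensor, sbjSet_union, h1.sbj, h2.sbj, Set.union_self]
  · intro A
    rw [show minLblP (esSum E1 E2) A = minLblP (esTensor E1 E2) A from rfl,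
      minLblP_tensor, h1.minl, h2.minl, hat_union]
  · obtain ⟨x, hx⟩ := h1.maxne
    rcases Set.eq_empty_or_nonempty x with rfl | hxne
    · have hev1 : E1.ev = ∅ := by
        rcases Set.eq_empty_or_nonempty E1.ev with h | h
        · exact h
        · exact absurd (h1.maxC_ne hx h) (by simp)
      obtain ⟨y, hy⟩ := h2.maxne
      exact ⟨_, maxC_sum_memR hy (Or.inr hev1)⟩
    · exact ⟨_, maxC_sum_memL hx (Or.inl hxne)⟩
  · intro A hA z hz
    rcases maxC_sum_cases hz with ⟨x, hx, rfl⟩ | ⟨y, hy, rfl⟩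
    · obtain ⟨e, he, hsbj⟩ := h1.hits A hA x hx
      exact ⟨tagL e, ⟨e, he, rfl⟩, by rw [lbl_sum_tagL]; exact hsbj⟩
    · obtain ⟨e, he, hsbj⟩ := h2.hits A hA y hy
      exact ⟨tagR e, ⟨e, he, rfl⟩, by rw [lbl_sum_tagR]; exact hsbj⟩
  · rintro u v ((⟨a, ha, b, hb, hab, rfl, rfl⟩ | ⟨a, ha, b, hb, hab, rfl, rfl⟩) |
      ⟨a, ha, b, hb, ⟨rfl, rfl⟩ | ⟨rfl, rfl⟩⟩)
    · exact Or.inl (Or.inl ⟨b, hb, a, ha, h1.sym _ _ hab, rfl, rfl⟩)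
    · exact Or.inl (Or.inr ⟨b, hb, a, ha, h2.sym _ _ hab, rfl, rfl⟩)
    · exact Or.inr ⟨a, ha, b, hb, Or.inr ⟨rfl, rfl⟩⟩
    · exact Or.inr ⟨a, ha, b, hb, Or.inl ⟨rfl, rfl⟩⟩

lemma wb_of_compch {Γ : Set P} {φ1 φ2 : Set (Label P M)}
    (h1 : Good Γ φ1 E1) (h2 : Good Γ φ2 E2) (hc : compch φ1 φ2 Γ) : wb E1 E2 := by
  obtain ⟨A, hA, ⟨⟨hdisj, hout⟩, hne1, hne2⟩, huniq, hpass⟩ := hc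
  refine ⟨A, ?_, ?_, ?_⟩
  · exact ⟨by rw [h1.minl]; exact hne1, by rw [h2.minl]; exact hne2,
      by rw [h1.minl, h2.minl]; exact hdisj, by rw [h1.minl, h2.minl]; exact hout⟩
  · intro A' hact
    obtain ⟨ha1, ha2, ha3, ha4⟩ := hact
    rw [h1.minl] at ha1 ha3 ha4
    rw [h2.minl] at ha2 ha3 ha4
    by_cases hmem : A' ∈ Γ
    · exact huniq A' hmem ⟨⟨ha3, ha4⟩, ha1, ha2⟩
    · exact absurd (h1.hat_empty hmem) ha1
  · intro B hB
    by_cases hmem : B ∈ Γ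
    · obtain ⟨⟨hd, hin⟩, hiff⟩ := hpass B hmem hB
      exact ⟨by rw [h1.minl, h2.minl]; exact hd, by rw [h1.minl, h2.minl]; exact hin,
        by rw [h1.minl, h2.minl]; exact hiff⟩
    · refine ⟨?_, ?_, ?_⟩ <;>
        rw [h1.minl, h2.minl, h1.hat_empty hmem, h2.hat_empty hmem] <;> simp

end Sum

section Seq
variable {E1 E2 : ES P M}

lemma encMax_inj (hfin : E1.ev.Finite) {x x' : Set ℕ} (hx : x ∈ E1.MaxC) (hx' : x' ∈ E1.MaxC)
    (h : encSet x = encSet x') : x = x' :=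
  encSet_inj (hfin.subset hx.1.1) (hfin.subset hx'.1.1) h

lemma mem_ev_seq {u : ℕ} :
    u ∈ (esSeq E1 E2).ev ↔ (∃ e ∈ E1.ev, u = tagL e) ∨
      (∃ x ∈ E1.MaxC, ∃ f ∈ E2.ev, u = tagC (encSet x) f) := by
  simp only [esSeq, Set.mem_union, Set.mem_image, Set.mem_setOf_eq]
  constructor
  · rintro (⟨e, he, rfl⟩ | h)
    · exact Or.inl ⟨e, he, rfl⟩
    · exact Or.inr h
  · rintro (⟨e, he, rfl⟩ | h)
    · exact Or.inl ⟨e, he, rfl⟩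
    · exact Or.inr h

lemma config_seq_zL {z : Set ℕ} (hz : (esSeq E1 E2).Config z) :
    E1.Config {e ∈ E1.ev | tagL e ∈ z} := by
  refine ⟨fun e he => he.1, ?_, ?_⟩
  · intro e he f hf hle
    refine ⟨hf, config_dc hz _ he.2 (tagL f) (mem_ev_seq.mpr (Or.inl ⟨f, hf, rfl⟩)) ?_⟩
    exact Or.inl ⟨f, hf, e, he.1, hle, rfl, rfl⟩
  · intro e he f hf hc
    exact config_cf hz _ he.2 _ hf.2 (Or.inl ⟨e, he.1, f, hf.1, hc, rfl, rfl⟩)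

lemma config_seq_zY {z : Set ℕ} (hz : (esSeq E1 E2).Config z) {x : Set ℕ} (hx : x ∈ E1.MaxC) :
    E2.Config {f ∈ E2.ev | tagC (encSet x) f ∈ z} := by
  refine ⟨fun e he => he.1, ?_, ?_⟩
  · intro e he f hf hle
    refine ⟨hf, config_dc hz _ he.2 (tagC (encSet x) f)
      (mem_ev_seq.mpr (Or.inr ⟨x, hx, f, hf, rfl⟩)) ?_⟩
    exact Or.inr (Or.inl ⟨x, hx, f, hf, e, he.1, hle, rfl, rfl⟩)
  · intro e he f hf hc
    exact config_cf hz _ he.2 _ hf.2 (Or.inr (Or.inl ⟨x, hx, e, he.1, f, hf.1, hc, rfl, rfl⟩))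

lemma config_seq_mk (hfin : E1.ev.Finite) {x y : Set ℕ} (hx : x ∈ E1.MaxC) (hy : E2.Config y) :
    (esSeq E1 E2).Config (tagL '' x ∪ tagC (encSet x) '' y) := by
  refine ⟨?_, ?_, ?_⟩
  · rintro u (⟨e, he, rfl⟩ | ⟨f, hf, rfl⟩)
    · exact mem_ev_seq.mpr (Or.inl ⟨e, hx.1.1 he, rfl⟩)
    · exact mem_ev_seq.mpr (Or.inr ⟨x, hx, f, hy.1 hf, rfl⟩)
  · rintro u (⟨e, he, rfl⟩ | ⟨g, hg, rfl⟩) f hf hle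
    · rcases hle with ⟨a, ha, b, hb, hab, rfl, heq⟩ | ⟨x', hx', a, ha, b, hb, hab, rfl, heq⟩ |
        ⟨x', hx', a, hax, b, hb, hsbj, rfl, heq⟩
      · obtain rfl := tagL_inj heq
        exact Set.mem_union_left _ ⟨a, config_dc hx.1 _ he _ ha hab, rfl⟩
      · exact absurd heq (tagL_ne_tagC _ _ _)
      · exact absurd heq (tagL_ne_tagC _ _ _)
    · rcases hle with ⟨a, ha, b, hb, hab, rfl, heq⟩ | ⟨x', hx', a, ha, b, hb, hab, rfl, heq⟩ |
        ⟨x', hx', a, hax, b, hb, hsbj, rfl, heq⟩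
      · exact absurd heq.symm (tagL_ne_tagC _ _ _)
      · obtain ⟨hk, rfl⟩ := tagC_eq_tagC.mp heq
        obtain rfl := encMax_inj hfin hx' hx hk.symm
        exact Set.mem_union_right _ ⟨a, config_dc hy _ hg _ ha hab, rfl⟩
      · obtain ⟨hk, rfl⟩ := tagC_eq_tagC.mp heq
        obtain rfl := encMax_inj hfin hx' hx hk.symm
        exact Set.mem_union_left _ ⟨a, hax, rfl⟩
  · rintro u hu v hv hc
    rcases hc with ⟨a, ha, b, hb, hab, hub, hvb⟩ | ⟨x', hx', a, ha, b, hb, hab, hub, hvb⟩ |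
      ⟨x1, hx1, x2, hx2, hne, a, ha, b, hb, hub, hvb⟩ |
      ⟨x', hx', a, ha, hcf, b, hb, ⟨hub, hvb⟩ | ⟨hub, hvb⟩⟩
    · rcases hu with ⟨e, he, rfl⟩ | ⟨g, hg, rfl⟩
      · rcases hv with ⟨e', he', rfl⟩ | ⟨g', hg', rfl⟩
        · obtain rfl := tagL_inj hub; obtain rfl := tagL_inj hvb
          exact config_cf hx.1 _ he _ he' hab
        · exact absurd hvb.symm (tagL_ne_tagC _ _ _)
      · exact absurd hub.symm (tagL_ne_tagC _ _ _)
    · rcases hu with ⟨e, he, rfl⟩ | ⟨g, hg, rfl⟩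
      · exact absurd hub (tagL_ne_tagC _ _ _)
      · rcases hv with ⟨e', he', rfl⟩ | ⟨g', hg', rfl⟩
        · exact absurd hvb (tagL_ne_tagC _ _ _)
        · obtain ⟨hk, rfl⟩ := tagC_eq_tagC.mp hub
          obtain ⟨hk', rfl⟩ := tagC_eq_tagC.mp hvb
          obtain rfl := encMax_inj hfin hx hx' hk
          exact config_cf hy _ hg _ hg' hab
    · rcases hu with ⟨e, he, rfl⟩ | ⟨g, hg, rfl⟩
      · exact absurd hub (tagL_ne_tagC _ _ _)
      · rcases hv with ⟨e', he', rfl⟩ | ⟨g', hg', rfl⟩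
        · exact absurd hvb (tagL_ne_tagC _ _ _)
        · obtain ⟨hk, rfl⟩ := tagC_eq_tagC.mp hub
          obtain ⟨hk', rfl⟩ := tagC_eq_tagC.mp hvb
          obtain rfl := encMax_inj hfin hx hx1 hk
          obtain rfl := encMax_inj hfin hx hx2 hk'
          exact hne rfl
    · rcases hu with ⟨e, he, rfl⟩ | ⟨g, hg, rfl⟩
      · obtain rfl := tagL_inj hub
        rcases hv with ⟨e', he', rfl⟩ | ⟨g', hg', rfl⟩
        · exact absurd hvb (tagL_ne_tagC _ _ _)
        · obtain ⟨hk, rfl⟩ := tagC_eq_tagC.mp hvb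
          obtain rfl := encMax_inj hfin hx hx' hk
          obtain ⟨e'', he''x, hcf'⟩ := hcf
          exact config_cf hx.1 _ he _ he''x hcf'
      · exact absurd hub.symm (tagL_ne_tagC _ _ _)
    · rcases hv with ⟨e, he, rfl⟩ | ⟨g, hg, rfl⟩
      · obtain rfl := tagL_inj hvb
        rcases hu with ⟨e', he', rfl⟩ | ⟨g', hg', rfl⟩
        · exact absurd hub (tagL_ne_tagC _ _ _)
        · obtain ⟨hk, rfl⟩ := tagC_eq_tagC.mp hub
          obtain rfl := encMax_inj hfin hx hx' hk
          obtain ⟨e'', he''x, hcf'⟩ := hcf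
          exact config_cf hx.1 _ he _ he''x hcf'
      · exact absurd hvb.symm (tagL_ne_tagC _ _ _)

lemma config_seq_mkL {w : Set ℕ} (hw : E1.Config w) : (esSeq E1 E2).Config (tagL '' w) := by
  refine ⟨?_, ?_, ?_⟩
  · rintro u ⟨e, he, rfl⟩
    exact mem_ev_seq.mpr (Or.inl ⟨e, hw.1 he, rfl⟩)
  · rintro u ⟨e, he, rfl⟩ f hf hle
    rcases hle with ⟨a, ha, b, hb, hab, rfl, heq⟩ | ⟨x', hx', a, ha, b, hb, hab, rfl, heq⟩ |
      ⟨x', hx', a, hax, b, hb, hsbj, rfl, heq⟩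
    · obtain rfl := tagL_inj heq
      exact ⟨a, config_dc hw _ he _ ha hab, rfl⟩
    · exact absurd heq (tagL_ne_tagC _ _ _)
    · exact absurd heq (tagL_ne_tagC _ _ _)
  · rintro u ⟨e, he, rfl⟩ v ⟨f, hf, rfl⟩ hc
    rcases hc with ⟨a, ha, b, hb, hab, hub, hvb⟩ | ⟨x', hx', a, ha, b, hb, hab, hub, hvb⟩ |
      ⟨x1, hx1, x2, hx2, hne, a, ha, b, hb, hub, hvb⟩ |
      ⟨x', hx', a, ha, hcf, b, hb, ⟨hub, hvb⟩ | ⟨hub, hvb⟩⟩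
    · obtain rfl := tagL_inj hub; obtain rfl := tagL_inj hvb
      exact config_cf hw _ he _ hf hab
    · exact absurd hub (tagL_ne_tagC _ _ _)
    · exact absurd hub (tagL_ne_tagC _ _ _)
    · exact absurd hvb (tagL_ne_tagC _ _ _)
    · exact absurd hub (tagL_ne_tagC _ _ _)

lemma maxC_seq_mem (hfin : E1.ev.Finite) {x y : Set ℕ} (hx : x ∈ E1.MaxC) (hy : y ∈ E2.MaxC)
    (hyor : y.Nonempty ∨ E2.ev = ∅) :
    (tagL '' x ∪ tagC (encSet x) '' y) ∈ (esSeq E1 E2).MaxC := by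
  refine ⟨config_seq_mk hfin hx hy.1, ?_⟩
  intro z hz hsub
  have hzl := config_seq_zL hz
  have hzlx : {e ∈ E1.ev | tagL e ∈ z} = x :=
    hx.2 _ hzl (fun e he => ⟨hx.1.1 he, hsub (Set.mem_union_left _ ⟨e, he, rfl⟩)⟩)
  have hzy := config_seq_zY hz hx
  have hzyy : {f ∈ E2.ev | tagC (encSet x) f ∈ z} = y :=
    hy.2 _ hzy (fun f hf => ⟨hy.1.1 hf, hsub (Set.mem_union_right _ ⟨f, hf, rfl⟩)⟩)
  refine Set.Subset.antisymm ?_ hsub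
  intro u hu
  rcases mem_ev_seq.mp (hz.1 hu) with ⟨e, he, rfl⟩ | ⟨x1, hx1, f, hf, rfl⟩
  · refine Set.mem_union_left _ ⟨e, ?_, rfl⟩
    rw [← hzlx]
    exact ⟨he, hu⟩
  · rcases hyor with ⟨g, hg⟩ | hev2
    · have hx1x : x1 = x := by
        by_contra hne
        exact config_cf hz _ hu _ (hsub (Set.mem_union_right _ ⟨g, hg, rfl⟩))
          (Or.inr (Or.inr (Or.inl ⟨x1, hx1, x, hx, hne, f, hf, g, hy.1.1 hg, rfl, rfl⟩)))
      subst hx1x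
      refine Set.mem_union_right _ ⟨f, ?_, rfl⟩
      rw [← hzyy]
      exact ⟨hf, hu⟩
    · exact absurd hf (by rw [hev2]; exact id)

lemma maxC_seq_cases (hfin : E1.ev.Finite)
    (hsym : ∀ u v, E1.conf u v → E1.conf v u)
    (hmax2 : E2.MaxC.Nonempty)
    (hne2 : ∀ y ∈ E2.MaxC, y = ∅ → E2.ev = ∅)
    {z : Set ℕ} (hz : z ∈ (esSeq E1 E2).MaxC) :
    ∃ x ∈ E1.MaxC, ∃ y ∈ E2.MaxC, z = tagL '' x ∪ tagC (encSet x) '' y := by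
  obtain ⟨hzc, hmax⟩ := hz
  have hzl := config_seq_zL hzc
  by_cases hC : ∃ x1 ∈ E1.MaxC, ∃ f ∈ E2.ev, tagC (encSet x1) f ∈ z
  · obtain ⟨x1, hx1, f, hf, hfz⟩ := hC
    -- all tagC elements of z share the index (the code of) x1
    have huniq : ∀ x2 ∈ E1.MaxC, ∀ g ∈ E2.ev, tagC (encSet x2) g ∈ z → encSet x2 = encSet x1 := by
      intro x2 hx2 g hg hgz
      by_contra hne
      have hxne : x2 ≠ x1 := fun h => hne (h ▸ rfl)
      exact config_cf hzc _ hgz _ hfz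
        (Or.inr (Or.inr (Or.inl ⟨x2, hx2, x1, hx1, hxne, g, hg, f, hf, rfl, rfl⟩)))
    -- z's left part is conflict-free with x1
    have hcross : ∀ e ∈ {e ∈ E1.ev | tagL e ∈ z}, ∀ e' ∈ x1, ¬ E1.conf e e' := by
      intro e he e' he' hconf
      exact config_cf hzc _ he.2 _ hfz
        (Or.inr (Or.inr (Or.inr ⟨x1, hx1, e, he.1, ⟨e', he', hconf⟩, f, hf, Or.inl ⟨rfl, rfl⟩⟩)))
    have hw : E1.Config ({e ∈ E1.ev | tagL e ∈ z} ∪ x1) := by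
      refine ⟨Set.union_subset (fun e he => he.1) hx1.1.1, ?_, ?_⟩
      · rintro e (he | he) g hg hle
        · exact Or.inl (config_dc hzl _ he _ hg hle)
        · exact Or.inr (config_dc hx1.1 _ he _ hg hle)
      · rintro e (he | he) g (hg | hg) hconf
        · exact config_cf hzl _ he _ hg hconf
        · exact hcross e he g hg hconf
        · exact hcross g hg e he (hsym _ _ hconf)
        · exact config_cf hx1.1 _ he _ hg hconf
    -- z's left part is contained in x1
    have hzlsub : {e ∈ E1.ev | tagL e ∈ z} ⊆ x1 := by
      have := hx1.2 _ hw Set.subset_union_right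
      intro e he
      rw [← this]
      exact Set.mem_union_left _ he
    -- z is contained in the candidate
    have hzy := config_seq_zY hzc hx1
    have hzsub : z ⊆ tagL '' x1 ∪ tagC (encSet x1) '' {f ∈ E2.ev | tagC (encSet x1) f ∈ z} := by
      intro u hu
      rcases mem_ev_seq.mp (hzc.1 hu) with ⟨e, he, rfl⟩ | ⟨x2, hx2, g, hg, rfl⟩
      · exact Set.mem_union_left _ ⟨e, hzlsub ⟨he, hu⟩, rfl⟩
      · have hk := huniq x2 hx2 g hg hu
        rw [hk] at hu ⊢
        exact Set.mem_union_right _ ⟨g, ⟨hg, hu⟩, rfl⟩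
    have hcand := config_seq_mk (E2 := E2) hfin hx1 hzy
    have heq := hmax _ hcand hzsub
    refine ⟨x1, hx1, {f ∈ E2.ev | tagC (encSet x1) f ∈ z}, ⟨hzy, ?_⟩, heq.symm⟩
    intro w hwc hwsub
    have hcand2 := config_seq_mk (E2 := E2) hfin hx1 hwc
    have heq2 := hmax _ hcand2
      (hzsub.trans (Set.union_subset_union_right _ (Set.image_mono hwsub)))
    refine Set.Subset.antisymm ?_ hwsub
    intro g hgw
    have : tagC (encSet x1) g ∈ z := by
      rw [← heq2]
      exact Set.mem_union_right _ ⟨g, hgw, rfl⟩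
    exact ⟨hwc.1 hgw, this⟩
  · -- no copy events at all in z
    push_neg at hC
    have hrep : z = tagL '' {e ∈ E1.ev | tagL e ∈ z} := by
      refine Set.Subset.antisymm ?_ (fun u => by rintro ⟨e, he, rfl⟩; exact he.2)
      intro u hu
      rcases mem_ev_seq.mp (hzc.1 hu) with ⟨e, he, rfl⟩ | ⟨x2, hx2, g, hg, rfl⟩
      · exact ⟨e, ⟨he, hu⟩, rfl⟩
      · exact absurd hu (hC x2 hx2 g hg)
    have hzlm : {e ∈ E1.ev | tagL e ∈ z} ∈ E1.MaxC := by
      refine ⟨hzl, ?_⟩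
      intro w hwc hwsub
      have heq := hmax _ (config_seq_mkL (E2 := E2) hwc)
        (by conv_lhs => rw [hrep]
            exact Set.image_mono hwsub)
      refine Set.Subset.antisymm ?_ hwsub
      intro e hew
      have : tagL e ∈ z := by rw [← heq]; exact ⟨e, hew, rfl⟩
      exact ⟨hwc.1 hew, this⟩
    obtain ⟨y0, hy0⟩ := hmax2
    have hcand := config_seq_mk (E2 := E2) hfin hzlm hy0.1
    rcases Set.eq_empty_or_nonempty y0 with rfl | ⟨g, hg⟩
    · refine ⟨_, hzlm, ∅, hy0, ?_⟩
      conv_lhs => rw [hrep]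
      simp
    · exfalso
      have heq := hmax _ hcand
        (by conv_lhs => rw [hrep]
            exact Set.subset_union_left)
      have hmem : tagC (encSet {e ∈ E1.ev | tagL e ∈ z}) g ∈
          tagL '' {e ∈ E1.ev | tagL e ∈ z} ∪
            tagC (encSet {e ∈ E1.ev | tagL e ∈ z}) '' y0 :=
        Set.mem_union_right _ ⟨g, hg, rfl⟩
      rw [heq] at hmem
      exact hC _ hzlm g (hy0.1.1 hg) hmem
      
lemma lblSet_seq (hmax1 : E1.MaxC.Nonempty) :
    (esSeq E1 E2).lblSet = E1.lblSet ∪ E2.lblSet := by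
  ext l
  simp only [ES.lblSet, Set.mem_image, Set.mem_union]
  constructor
  · rintro ⟨u, hu, rfl⟩
    rcases mem_ev_seq.mp hu with ⟨e, he, rfl⟩ | ⟨x, hx, f, hf, rfl⟩
    · exact Or.inl ⟨e, he, (lbl_seq_tagL E1 E2 e).symm⟩
    · exact Or.inr ⟨f, hf, (lbl_seq_tagC E1 E2 _ f).symm⟩
  · rintro (⟨e, he, rfl⟩ | ⟨f, hf, rfl⟩)
    · exact ⟨tagL e, mem_ev_seq.mpr (Or.inl ⟨e, he, rfl⟩), lbl_seq_tagL E1 E2 e⟩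
    · obtain ⟨x, hx⟩ := hmax1
      exact ⟨tagC (encSet x) f, mem_ev_seq.mpr (Or.inr ⟨x, hx, f, hf, rfl⟩),
        lbl_seq_tagC E1 E2 _ f⟩

lemma good_seq {Γ1 Γ2 : Set P} {φ1 φ2 : Set (Label P M)}
    (h1 : Good Γ1 φ1 E1) (h2 : Good Γ2 φ2 E2) :
    Good (Γ1 ∪ Γ2) (φ1 ∪ lminus φ2 Γ1) (esSeq E1 E2) := by
  have hne2 : ∀ y ∈ E2.MaxC, y = ∅ → E2.ev = ∅ := by
    intro y hy hye
    rcases Set.eq_empty_or_nonempty E2.ev with h | h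
    · exact h
    · obtain ⟨f, hf⟩ := h2.maxC_ne hy h
      rw [hye] at hf
      exact hf.elim
  refine ⟨?_, ?_, ?_, ?_, ?_, ?_⟩
  · refine Set.Finite.union (h1.fin.image _) ?_
    have hMfin : E1.MaxC.Finite :=
      Set.Finite.subset h1.fin.finite_subsets (fun x hx => hx.1.1)
    refine Set.Finite.subset (Set.Finite.image2 (fun x e => tagC (encSet x) e) hMfin h2.fin) ?_
    rintro u ⟨x, hx, e, he, rfl⟩
    exact Set.mem_image2_of_mem hx he
  · rw [lblSet_seq h1.maxne, sbjSet_union, h1.sbj, h2.sbj]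
  · intro A
    by_cases hA : A ∈ Γ1
    · rw [hat_union, hat_lminus_mem _ hA, Set.union_empty, ← h1.minl]
      ext l
      simp only [minLblP, ES.minLbl, ES.minEv, ES.minIn, ES.proj, Set.mem_image,
        Set.mem_setOf_eq]
      constructor
      · rintro ⟨u, ⟨⟨huev, husbj⟩, humin⟩, rfl⟩
        rcases mem_ev_seq.mp huev with ⟨e, he, rfl⟩ | ⟨x, hx, f, hf, rfl⟩
        · rw [lbl_seq_tagL] at husbj
          refine ⟨e, ⟨⟨he, husbj⟩, ?_⟩, (lbl_seq_tagL E1 E2 e).symm⟩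
          rintro f' ⟨hfev, hfsbj⟩ ⟨hle, -, -⟩
          have := humin (tagL f')
            ⟨mem_ev_seq.mpr (Or.inl ⟨f', hfev, rfl⟩), by rw [lbl_seq_tagL]; exact hfsbj⟩
            ⟨Or.inl ⟨f', hfev, e, he, hle, rfl, rfl⟩,
              ⟨mem_ev_seq.mpr (Or.inl ⟨f', hfev, rfl⟩), by rw [lbl_seq_tagL]; exact hfsbj⟩,
              ⟨huev, husbj.symm ▸ (lbl_seq_tagL E1 E2 e).symm ▸ rfl⟩⟩
          exact tagL_inj this
        · exfalso
          rw [lbl_seq_tagC] at husbj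
          obtain ⟨e, hex, hesbj⟩ := h1.hits A hA x hx
          have hee : e ∈ E1.ev := hx.1.1 hex
          have := humin (tagL e)
            ⟨mem_ev_seq.mpr (Or.inl ⟨e, hee, rfl⟩), by rw [lbl_seq_tagL]; exact hesbj⟩
            ⟨Or.inr (Or.inr ⟨x, hx, e, hex, f, hf, by rw [hesbj, husbj], rfl, rfl⟩),
              ⟨mem_ev_seq.mpr (Or.inl ⟨e, hee, rfl⟩), by rw [lbl_seq_tagL]; exact hesbj⟩,
              ⟨huev, by rw [lbl_seq_tagC]; exact husbj⟩⟩
          exact tagL_ne_tagC _ _ _ this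
      · rintro ⟨e, ⟨⟨hev, hsbj⟩, hmin⟩, rfl⟩
        refine ⟨tagL e, ⟨⟨mem_ev_seq.mpr (Or.inl ⟨e, hev, rfl⟩),
          by rw [lbl_seq_tagL]; exact hsbj⟩, ?_⟩, lbl_seq_tagL E1 E2 e⟩
        rintro f ⟨hfev, hfsbj⟩ ⟨hle, -, -⟩
        rcases hle with ⟨a, ha, b, hb, hab, rfl, heq⟩ | ⟨x', hx', a, ha, b, hb, hab, rfl, heq⟩ |
          ⟨x', hx', a, hax, b, hb, hs, rfl, heq⟩
        · obtain rfl := tagL_inj heq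
          rw [lbl_seq_tagL] at hfsbj
          obtain rfl := hmin a ⟨ha, hfsbj⟩ ⟨hab, ⟨ha, hfsbj⟩, hev, hsbj⟩
          rfl
        · exact absurd heq (tagL_ne_tagC _ _ _)
        · exact absurd heq (tagL_ne_tagC _ _ _)
    · rw [hat_union, h1.hat_empty hA, Set.empty_union, hat_lminus_not_mem _ hA, ← h2.minl]
      have hnoA : ∀ e ∈ E1.ev, (E1.lbl e).sbj ≠ A := fun e he h => hA (h ▸ h1.mem_gamma he)
      ext l
      simp only [minLblP, ES.minLbl, ES.minEv, ES.minIn, ES.proj, Set.mem_image,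
        Set.mem_setOf_eq]
      constructor
      · rintro ⟨u, ⟨⟨huev, husbj⟩, humin⟩, rfl⟩
        rcases mem_ev_seq.mp huev with ⟨e, he, rfl⟩ | ⟨x, hx, f, hf, rfl⟩
        · rw [lbl_seq_tagL] at husbj
          exact absurd husbj (hnoA e he)
        · rw [lbl_seq_tagC] at husbj
          refine ⟨f, ⟨⟨hf, husbj⟩, ?_⟩, (lbl_seq_tagC E1 E2 _ f).symm⟩
          rintro g ⟨hgev, hgsbj⟩ ⟨hle, -, -⟩
          have := humin (tagC (encSet x) g)
            ⟨mem_ev_seq.mpr (Or.inr ⟨x, hx, g, hgev, rfl⟩),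
              by rw [lbl_seq_tagC]; exact hgsbj⟩
            ⟨Or.inr (Or.inl ⟨x, hx, g, hgev, f, hf, hle, rfl, rfl⟩),
              ⟨mem_ev_seq.mpr (Or.inr ⟨x, hx, g, hgev, rfl⟩),
                by rw [lbl_seq_tagC]; exact hgsbj⟩,
              ⟨huev, by rw [lbl_seq_tagC]; exact husbj⟩⟩
          exact (tagC_eq_tagC.mp this).2
      · rintro ⟨f, ⟨⟨hf, hsbj⟩, hmin⟩, rfl⟩
        obtain ⟨x0, hx0⟩ := h1.maxne
        refine ⟨tagC (encSet x0) f, ⟨⟨mem_ev_seq.mpr (Or.inr ⟨x0, hx0, f, hf, rfl⟩),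
          by rw [lbl_seq_tagC]; exact hsbj⟩, ?_⟩, lbl_seq_tagC E1 E2 _ f⟩
        rintro f0 ⟨hf0ev, hf0sbj⟩ ⟨hle, -, -⟩
        rcases hle with ⟨a, ha, b, hb, hab, rfl, heq⟩ | ⟨x', hx', a, ha, b, hb, hab, rfl, heq⟩ |
          ⟨x', hx', a, hax, b, hb, hs, rfl, heq⟩
        · exact absurd heq.symm (tagL_ne_tagC _ _ _)
        · obtain ⟨hk, rfl⟩ := tagC_eq_tagC.mp heq
          rw [lbl_seq_tagC] at hf0sbj
          obtain rfl := hmin a ⟨ha, hf0sbj⟩ ⟨hab, ⟨ha, hf0sbj⟩, hf, hsbj⟩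
          rw [hk]
        · rw [lbl_seq_tagL] at hf0sbj
          exact absurd hf0sbj (hnoA a (hx'.1.1 hax))
  · obtain ⟨x, hx⟩ := h1.maxne
    obtain ⟨y, hy⟩ := h2.maxne
    have hyor : y.Nonempty ∨ E2.ev = ∅ := by
      rcases Set.eq_empty_or_nonempty E2.ev with h | h
      · exact Or.inr h
      · exact Or.inl (h2.maxC_ne hy h)
    exact ⟨_, maxC_seq_mem h1.fin hx hy hyor⟩
  · intro A hA z hz
    obtain ⟨x, hx, y, hy, rfl⟩ := maxC_seq_cases h1.fin h1.sym h2.maxne hne2 hz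
    rcases hA with hA | hA
    · obtain ⟨e, he, hsbj⟩ := h1.hits A hA x hx
      exact ⟨tagL e, Set.mem_union_left _ ⟨e, he, rfl⟩, by rw [lbl_seq_tagL]; exact hsbj⟩
    · obtain ⟨f, hf, hsbj⟩ := h2.hits A hA y hy
      exact ⟨tagC (encSet x) f, Set.mem_union_right _ ⟨f, hf, rfl⟩,
        by rw [lbl_seq_tagC]; exact hsbj⟩
  · rintro u v (⟨a, ha, b, hb, hab, rfl, rfl⟩ | ⟨x, hx, a, ha, b, hb, hab, rfl, rfl⟩ |
      ⟨x, hx, x', hx', hnex, a, ha, b, hb, rfl, rfl⟩ |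
      ⟨x, hx, a, ha, hcf, b, hb, ⟨rfl, rfl⟩ | ⟨rfl, rfl⟩⟩)
    · exact Or.inl ⟨b, hb, a, ha, h1.sym _ _ hab, rfl, rfl⟩
    · exact Or.inr (Or.inl ⟨x, hx, b, hb, a, ha, h2.sym _ _ hab, rfl, rfl⟩)
    · exact Or.inr (Or.inr (Or.inl ⟨x', hx', x, hx, hnex.symm, b, hb, a, ha, rfl, rfl⟩))
    · exact Or.inr (Or.inr (Or.inr ⟨x, hx, a, ha, hcf, b, hb, Or.inr ⟨rfl, rfl⟩⟩))
    · exact Or.inr (Or.inr (Or.inr ⟨x, hx, a, ha, hcf, b, hb, Or.inl ⟨rfl, rfl⟩⟩))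

end Seq

theorem typing_sound [Nonempty P] [Nonempty M] {Γ : Set P} {G : GC P M} {φ Λ : Set (Label P M)}
    (h : Typing Γ G φ Λ) : ∃ E, gsem G = some E ∧ Good Γ φ E := by
  induction h with
  | temp => exact ⟨esEmpty, rfl, good_empty⟩
  | @tint a b m hab => exact ⟨_, by simp [gsem, hab], good_act _ hab⟩
  | tseq h1 h2 ih1 ih2 =>
    obtain ⟨E1, hE1, hg1⟩ := ih1
    obtain ⟨E2, hE2, hg2⟩ := ih2
    exact ⟨_, by simp [gsem, hE1, hE2], good_seq hg1 hg2⟩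
  | tpar h1 h2 hd ih1 ih2 =>
    obtain ⟨E1, hE1, hg1⟩ := ih1
    obtain ⟨E2, hE2, hg2⟩ := ih2
    refine ⟨_, ?_, good_tensor hg1 hg2⟩
    simp [gsem, hE1, hE2, lblSet_disjoint hg1 hg2 hd]
  | tch h1 h2 hc ih1 ih2 =>
    obtain ⟨E1, hE1, hg1⟩ := ih1
    obtain ⟨E2, hE2, hg2⟩ := ih2
    refine ⟨_, ?_, good_sum hg1 hg2⟩
    simp [gsem, hE1, hE2, wb_of_compch hg1 hg2 hc]

end Sound

/-- Compositionality of typing with respect to one-hole contexts: if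
`Π' ⊢ G'[·] : ⟨φ',Λ'⟩` is derivable in the system extended with the hole axiom
`Π ⊢ [·] : ⟨φ,Λ⟩`, then for every ground `G` with `Π ⊢ G : ⟨φ,Λ⟩` derivable,
`Π' ⊢ G'[G] : ⟨φ',Λ'⟩` is derivable and `⟦G'[G]⟧ ≠ ⊥`. -/
theorem compositionality {P M : Type} [Infinite P] [Infinite M]
    {Γh : Set P} {φh Λh : Set (Label P M)}
    {Γ' : Set P} {C : Ctx P M} {φ' Λ' : Set (Label P M)}
    (hC : CTyping Γh φh Λh Γ' C φ' Λ') :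
    ∀ G : GC P M, Typing Γh G φh Λh →
      Typing Γ' (C.fill G) φ' Λ' ∧ gsem (C.fill G) ≠ none := by
  intro G hG
  have hty : Typing Γ' (C.fill G) φ' Λ' := by
    induction hC with
    | hole => exact hG
    | seqL h1 h2 ih => exact Typing.tseq ih h2
    | seqR h1 h2 ih => exact Typing.tseq h1 ih
    | parL h1 h2 hd ih => exact Typing.tpar ih h2 hd
    | parR h1 h2 hd ih => exact Typing.tpar h1 ih hd
    | choL h1 h2 hc ih => exact Typing.tch ih h2 hc
    | choR h1 h2 hc ih => exact Typing.tch h1 ih hc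
  refine ⟨hty, ?_⟩
  obtain ⟨E, hE, -⟩ := typing_sound hty
  rw [hE]
  exact Option.some_ne_none _

end Choreo
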